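/- Let P ∈ ℝ^{m×(L+1)p} satisfy P · I_L = [I_m, 0], and define Ã := A − B P O_L. Then the output-nulling subspace V₀ is Ã-invariant: for every ξ ∈ V₀, Ã ξ ∈ V₀. -/
import Mathlib


open Matrix

/-- Block observability matrix `O_L` with block rows `C A^k`, `k = 0,…,L`. -/
noncomputable def obsMat {n p : ℕ} (A : Matrix (Fin n) (Fin n) ℝ)
    (C : Matrix (Fin p) (Fin n) ℝ) (L : ℕ) :
    Matrix (Fin (L + 1) × Fin p) (Fin n) ℝ :=
  fun kr j => (C * A ^ (kr.1 : ℕ)) kr.2 j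

/-- Block invertibility (Toeplitz) matrix `I_L` of the LTI system `(A,B,C,D)`. -/
noncomputable def invMat {n m p : ℕ} (A : Matrix (Fin n) (Fin n) ℝ)
    (B : Matrix (Fin n) (Fin m) ℝ) (C : Matrix (Fin p) (Fin n) ℝ)
    (D : Matrix (Fin p) (Fin m) ℝ) (L : ℕ) :
    Matrix (Fin (L + 1) × Fin p) (Fin (L + 1) × Fin m) ℝ :=
  fun jr ic =>
    if (jr.1 : ℕ) = (ic.1 : ℕ) then D jr.2 ic.2
    else if (ic.1 : ℕ) < (jr.1 : ℕ) then
      (C * A ^ ((jr.1 : ℕ) - (ic.1 : ℕ) - 1) * B) jr.2 ic.2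
    else 0

/-- The block matrix `[I_m, 0] ∈ ℝ^{m × (L+1)m}`. -/
noncomputable def idZero (m L : ℕ) : Matrix (Fin m) (Fin (L + 1) × Fin m) ℝ :=
  fun r ic => if (ic.1 : ℕ) = 0 ∧ r = ic.2 then 1 else 0

/-- The state sequence of `x_{k+1} = A x_k + B u_k` from initial state `ξ`. -/
noncomputable def stateSeq {n m : ℕ} (A : Matrix (Fin n) (Fin n) ℝ)
    (B : Matrix (Fin n) (Fin m) ℝ) (ξ : Fin n → ℝ) (u : ℕ → Fin m → ℝ) :
    ℕ → Fin n → ℝ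
  | 0 => ξ
  | k + 1 => A.mulVec (stateSeq A B ξ u k) + B.mulVec (u k)

/-- The output-nulling subspace `V₀`: states from which some input sequence keeps the
output `y_k = C x_k + D u_k` identically zero. -/
def outputNulling {n m p : ℕ} (A : Matrix (Fin n) (Fin n) ℝ)
    (B : Matrix (Fin n) (Fin m) ℝ) (C : Matrix (Fin p) (Fin n) ℝ)
    (D : Matrix (Fin p) (Fin m) ℝ) : Set (Fin n → ℝ) :=
  {ξ | ∃ u : ℕ → Fin m → ℝ, ∀ k, C.mulVec (stateSeq A B ξ u k) + D.mulVec (u k) = 0}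

lemma mulVec_sum' {n q : ℕ} {ι : Type*} (A : Matrix (Fin n) (Fin q) ℝ) (s : Finset ι)
    (f : ι → Fin q → ℝ) : A.mulVec (∑ i ∈ s, f i) = ∑ i ∈ s, A.mulVec (f i) := by
  ext j
  simp [mulVec, dotProduct, Finset.mul_sum]
  rw [Finset.sum_comm]

lemma stateSeq_formula {n m : ℕ} (A : Matrix (Fin n) (Fin n) ℝ)
    (B : Matrix (Fin n) (Fin m) ℝ) (ξ : Fin n → ℝ) (u : ℕ → Fin m → ℝ) :
    ∀ k, stateSeq A B ξ u k =
      (A ^ k).mulVec ξ + ∑ i ∈ Finset.range k, ((A ^ (k - 1 - i)) * B).mulVec (u i) := by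
  intro k
  induction k with
  | zero => simp [stateSeq]
  | succ k ih =>
    rw [show stateSeq A B ξ u (k+1) = A.mulVec (stateSeq A B ξ u k) + B.mulVec (u k) from rfl,
      ih]
    rw [Finset.sum_range_succ]
    have h1 : ∀ i, i ∈ Finset.range k → (A ^ (k + 1 - 1 - i) * B).mulVec (u i)
        = A.mulVec ((A ^ (k - 1 - i) * B).mulVec (u i)) := by
      intro i hi
      rw [Finset.mem_range] at hi
      rw [show k + 1 - 1 - i = (k - 1 - i) + 1 by omega, pow_succ', Matrix.mul_assoc,
        ← mulVec_mulVec]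
    rw [Finset.sum_congr rfl h1]
    have h0 : k + 1 - 1 - k = 0 := by omega
    rw [h0]
    rw [Matrix.mulVec_add, mulVec_sum', mulVec_mulVec, ← pow_succ']
    simp
    abel

lemma key {n m p L : ℕ} (A : Matrix (Fin n) (Fin n) ℝ) (B : Matrix (Fin n) (Fin m) ℝ)
    (C : Matrix (Fin p) (Fin n) ℝ) (D : Matrix (Fin p) (Fin m) ℝ)
    (ξ : Fin n → ℝ) (u : ℕ → Fin m → ℝ)
    (hu : ∀ k, C.mulVec (stateSeq A B ξ u k) + D.mulVec (u k) = 0) :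
    (obsMat A C L).mulVec ξ + (invMat A B C D L).mulVec (fun ic => u ic.1 ic.2) = 0 := by
  funext jr
  obtain ⟨j, r⟩ := jr
  have hinv : ((invMat A B C D L).mulVec (fun ic => u ic.1 ic.2)) (j, r)
      = (D.mulVec (u j)) r
        + ∑ i ∈ Finset.range (j : ℕ), ((C * A ^ ((j : ℕ) - i - 1) * B).mulVec (u i)) r := by
    simp only [mulVec, dotProduct, invMat, Fintype.sum_prod_type]
    have hsplit : ∀ i : Fin (L + 1),
        (∑ c, (if (j : ℕ) = (i : ℕ) then D r c
          else if (i : ℕ) < (j : ℕ) then (C * A ^ ((j : ℕ) - (i : ℕ) - 1) * B) r c else 0)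
            * u i c)
        = (fun t : ℕ => if (j : ℕ) = t then ∑ c, D r c * u t c
            else if t < (j : ℕ) then ∑ c, (C * A ^ ((j : ℕ) - t - 1) * B) r c * u t c
            else 0) (i : ℕ) := by
      intro i
      split_ifs with h1 h2 <;> simp [*]
    have huniv := Fin.sum_univ_eq_sum_range
      (fun t : ℕ => if (j : ℕ) = t then ∑ c, D r c * u t c
        else if t < (j : ℕ) then ∑ c, (C * A ^ ((j : ℕ) - t - 1) * B) r c * u t c
        else 0) (L + 1)
    rw [Finset.sum_congr rfl (fun i _ => hsplit i), huniv]
    rw [← Finset.sum_subset (Finset.range_subset_range.mpr (show (j:ℕ) + 1 ≤ L + 1 by omega))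
      (by intro t ht hnt
          simp only [Finset.mem_range] at ht hnt
          have h1 : (j:ℕ) ≠ t := by omega
          have h2 : ¬ t < (j:ℕ) := by omega
          simp [h1, h2])]
    rw [Finset.sum_range_succ]
    rw [if_pos rfl]
    have hterms : ∀ t ∈ Finset.range (j:ℕ),
        (if (j : ℕ) = t then ∑ c, D r c * u t c
          else if t < (j : ℕ) then ∑ c, (C * A ^ ((j : ℕ) - t - 1) * B) r c * u t c
          else 0)
        = ((C * A ^ ((j : ℕ) - t - 1) * B).mulVec (u t)) r := by
      intro t ht
      rw [Finset.mem_range] at ht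
      rw [if_neg (by omega), if_pos ht]
      rfl
    rw [Finset.sum_congr rfl hterms]
    rw [add_comm]
    rfl
  have hobs : ((obsMat A C L).mulVec ξ) (j, r) = ((C * A ^ (j : ℕ)).mulVec ξ) r := rfl
  have hsum : (C.mulVec (∑ i ∈ Finset.range (j:ℕ), (A ^ ((j:ℕ) - 1 - i) * B).mulVec (u i))) r
      = ∑ i ∈ Finset.range (j:ℕ), ((C * A ^ ((j : ℕ) - i - 1) * B).mulVec (u i)) r := by
    have h1 : C.mulVec (∑ i ∈ Finset.range (j:ℕ), (A ^ ((j:ℕ) - 1 - i) * B).mulVec (u i))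
        = ∑ i ∈ Finset.range (j:ℕ), C.mulVec ((A ^ ((j:ℕ) - 1 - i) * B).mulVec (u i)) :=
      mulVec_sum' C _ _
    rw [h1, Finset.sum_apply]
    refine Finset.sum_congr rfl fun i hi => ?_
    rw [Finset.mem_range] at hi
    rw [mulVec_mulVec, ← Matrix.mul_assoc,
      show (j:ℕ) - 1 - i = (j:ℕ) - i - 1 by omega]
  have hy := congrFun (hu j) r
  rw [stateSeq_formula, Matrix.mulVec_add] at hy
  simp only [Pi.add_apply, Pi.zero_apply] at hy
  rw [hsum, mulVec_mulVec] at hy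
  rw [Pi.add_apply, hinv, hobs, Pi.zero_apply]
  linarith [hy]

lemma idZero_mulVec {m L : ℕ} (u : ℕ → Fin m → ℝ) :
    (idZero m L).mulVec (fun ic => u ic.1 ic.2) = u 0 := by
  funext r
  simp only [idZero, mulVec, dotProduct, Fintype.sum_prod_type, ite_and]
  rw [Finset.sum_comm]
  have h0 : ∀ c : Fin m,
      (∑ i : Fin (L + 1), (if (i : ℕ) = 0 then if r = c then (1:ℝ) else 0 else 0) * u i c)
      = if r = c then u 0 c else 0 := by
    intro c
    have : ∀ i : Fin (L + 1),
        (if (i : ℕ) = 0 then if r = c then (1:ℝ) else 0 else 0) * u i c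
        = if i = (0 : Fin (L + 1)) then (if r = c then u (i : ℕ) c else 0) else 0 := by
      intro i
      by_cases h : i = 0
      · simp [h]
      · have : ¬ (i : ℕ) = 0 := fun hc => h (Fin.ext hc)
        simp [h, this]
    rw [Finset.sum_congr rfl (fun i _ => this i)]
    simp
  rw [Finset.sum_congr rfl (fun c _ => h0 c)]
  simp

lemma stateSeq_shift {n m : ℕ} (A : Matrix (Fin n) (Fin n) ℝ)
    (B : Matrix (Fin n) (Fin m) ℝ) (ξ : Fin n → ℝ) (u : ℕ → Fin m → ℝ) :
    ∀ k, stateSeq A B (stateSeq A B ξ u 1) (fun t => u (t + 1)) k = stateSeq A B ξ u (k + 1) := by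
  intro k
  induction k with
  | zero => rfl
  | succ k ih =>
    show A.mulVec (stateSeq A B (stateSeq A B ξ u 1) (fun t => u (t + 1)) k)
        + B.mulVec (u (k + 1)) = _
    rw [ih]
    rfl

/-- If `P I_L = [I_m, 0]` and `Ã := A - B P O_L`, then the output-nulling subspace `V₀`
is `Ã`-invariant. -/
theorem outputNulling_tildeA_invariant {n m p L : ℕ}
    (A : Matrix (Fin n) (Fin n) ℝ) (B : Matrix (Fin n) (Fin m) ℝ)
    (C : Matrix (Fin p) (Fin n) ℝ) (D : Matrix (Fin p) (Fin m) ℝ)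
    (P : Matrix (Fin m) (Fin (L + 1) × Fin p) ℝ)
    (hP : P * invMat A B C D L = idZero m L) :
    ∀ ξ ∈ outputNulling A B C D,
      (A - B * P * obsMat A C L).mulVec ξ ∈ outputNulling A B C D := by
  intro ξ hξ
  obtain ⟨u, hu⟩ := hξ
  have hkey := key A B C D ξ u hu (L := L)
  -- P O_L ξ = - u 0
  have hPO : (P * obsMat A C L).mulVec ξ = -(u 0) := by
    have h1 : (obsMat A C L).mulVec ξ
        = -((invMat A B C D L).mulVec (fun ic => u ic.1 ic.2)) := by
      rw [eq_neg_iff_add_eq_zero]; exact hkey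
    rw [← mulVec_mulVec, h1, Matrix.mulVec_neg, mulVec_mulVec, hP, idZero_mulVec]
  have hstep : (A - B * P * obsMat A C L).mulVec ξ = stateSeq A B ξ u 1 := by
    rw [Matrix.sub_mulVec]
    show _ = A.mulVec (stateSeq A B ξ u 0) + B.mulVec (u 0)
    rw [show stateSeq A B ξ u 0 = ξ from rfl]
    rw [Matrix.mul_assoc, ← mulVec_mulVec, hPO, Matrix.mulVec_neg, sub_neg_eq_add]
  rw [hstep]
  exact ⟨fun t => u (t + 1), fun k => by rw [stateSeq_shift]; exact hu (k + 1)⟩
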